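/- Let σ = ⟨(0,1,0),(0,0,1),(6,8,9)⟩ ⊆ ℝ³, a three-dimensional simplicial cone with primitive integer generators, and let l : ℝ³ → ℝ be the unique linear form with l(0,1,0) = l(0,0,1) = l(6,8,9) = 1, namely l(x,y,z) = (3y + 3z − 8x)/3. Then (1,2,2) ∈ σ ∩ ℤ³ is irreducible (belongs to the Hilbert basis of σ), yet l(1,2,2) = 4/3 > 1. Consequently the Hilbert basis of σ is not contained in the profile p_σ = σ ∩ l⁻¹([0,1]). -/

import Mathlib

open scoped BigOperators

/-- The real-coordinate vector attached to an integer vector. -/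
def toR {n : ℕ} (u : Fin n → ℤ) : Fin n → ℝ := fun j => (u j : ℝ)

/-- The rational polyhedral cone generated by integer vectors `v 0, …, v (r-1)`:
all nonnegative real linear combinations of the generators. -/
def coneOf {n r : ℕ} (v : Fin r → (Fin n → ℤ)) : Set (Fin n → ℝ) :=
  { x | ∃ c : Fin r → ℝ, (∀ i, 0 ≤ c i) ∧ x = ∑ i, c i • toR (v i) }

/-- The lattice points of a subset of `ℝⁿ`: `S_σ = σ ∩ ℤⁿ`. -/
def latticePoints {n : ℕ} (σ : Set (Fin n → ℝ)) : Set (Fin n → ℤ) :=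
  { u | toR u ∈ σ }

/-- `u` is an irreducible element of `S`: it is a nonzero element of `S` which cannot be
written as the sum of two nonzero elements of `S`. -/
def IsIrreducibleElt {n : ℕ} (S : Set (Fin n → ℤ)) (u : Fin n → ℤ) : Prop :=
  u ∈ S ∧ u ≠ 0 ∧ ∀ a b : Fin n → ℤ, a ∈ S → b ∈ S → u = a + b → a = 0 ∨ b = 0

/-- The Hilbert basis of (the monoid of lattice points of) a cone:
the set of its irreducible elements. -/
def hilbertBasis {n : ℕ} (S : Set (Fin n → ℤ)) : Set (Fin n → ℤ) :=
  { u | IsIrreducibleElt S u }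

/-- for the simplicial cone `σ = ⟨(0,1,0),(0,0,1),(6,8,9)⟩` and the linear
form `l(x,y,z) = (3y + 3z − 8x)/3` (the unique one taking value `1` on the generators),
the lattice point `(1,2,2)` is irreducible in `S_σ = σ ∩ ℤ³` yet `l(1,2,2) = 4/3 > 1`;
consequently the Hilbert basis of `σ` is not contained in the profile
`p_σ = σ ∩ l⁻¹([0,1])`. -/
lemma mem_cone_iff (u : Fin 3 → ℤ) :
    toR u ∈ coneOf ![![0, 1, 0], ![0, 0, 1], ![6, 8, 9]] ↔
    0 ≤ u 0 ∧ 4 * u 0 ≤ 3 * u 1 ∧ 3 * u 0 ≤ 2 * u 2 := by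
  constructor
  · rintro ⟨c, hc, hx⟩
    have h0 := congrFun hx 0
    have h1 := congrFun hx 1
    have h2 := congrFun hx 2
    simp [toR, Fin.sum_univ_three] at h0 h1 h2
    have hc0 := hc 0
    have hc1 := hc 1
    have hc2 := hc 2
    refine ⟨?_, ?_, ?_⟩
    · have : (0 : ℝ) ≤ (u 0 : ℝ) := by rw [h0]; positivity
      exact_mod_cast this
    · have : (4 * u 0 : ℝ) ≤ (3 * u 1 : ℝ) := by
        push_cast; rw [h0, h1]; nlinarith
      exact_mod_cast this
    · have : (3 * u 0 : ℝ) ≤ (2 * u 2 : ℝ) := by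
        push_cast; rw [h0, h2]; nlinarith
      exact_mod_cast this
  · rintro ⟨h0, h1, h2⟩
    refine ⟨![(3 * u 1 - 4 * u 0 : ℝ) / 3, (2 * u 2 - 3 * u 0 : ℝ) / 2, (u 0 : ℝ) / 6],
      ?_, ?_⟩
    · intro i
      have h0' : (0 : ℝ) ≤ u 0 := by exact_mod_cast h0
      have h1' : (4 * u 0 : ℝ) ≤ 3 * u 1 := by exact_mod_cast h1
      have h2' : (3 * u 0 : ℝ) ≤ 2 * u 2 := by exact_mod_cast h2
      fin_cases i <;> simp <;> linarith
    · funext j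
      fin_cases j <;> simp [toR, Fin.sum_univ_three] <;> ring

theorem elliptic_hilbert_basis_not_in_profile :
    let v : Fin 3 → (Fin 3 → ℤ) := ![![0, 1, 0], ![0, 0, 1], ![6, 8, 9]]
    let σ := coneOf v
    let S := latticePoints σ
    let l : (Fin 3 → ℝ) → ℝ := fun x => (3 * x 1 + 3 * x 2 - 8 * x 0) / 3
    (∀ i, l (toR (v i)) = 1) ∧
    IsIrreducibleElt S ![1, 2, 2] ∧
    l (toR ![1, 2, 2]) = 4 / 3 ∧ (1 : ℝ) < 4 / 3 ∧
    ¬ (∀ u : Fin 3 → ℤ, IsIrreducibleElt S u →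
        toR u ∈ σ ∩ l ⁻¹' Set.Icc (0 : ℝ) 1) := by
  intro v σ S l
  have hirr : IsIrreducibleElt S ![1, 2, 2] := by
    refine ⟨?_, ?_, ?_⟩
    · show toR _ ∈ σ
      rw [mem_cone_iff]
      norm_num [Matrix.cons_val_two]
    · intro h
      have := congrFun h 0
      simp at this
    · intro a b ha hb hab
      have ha' := (mem_cone_iff a).mp ha
      have hb' := (mem_cone_iff b).mp hb
      have e0 := congrFun hab 0
      have e1 := congrFun hab 1
      have e2 := congrFun hab 2
      simp [Pi.add_apply] at e0 e1 e2
      rcases ha' with ⟨ha0, ha1, ha2⟩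
      rcases hb' with ⟨hb0, hb1, hb2⟩
      rcases le_or_gt (a 0) 0 with h | h
      · left
        have ha0' : a 0 = 0 := le_antisymm h ha0
        have ha1' : a 1 = 0 := by omega
        have ha2' : a 2 = 0 := by omega
        funext i; fin_cases i <;> simpa
      · right
        have hb0' : b 0 = 0 := by omega
        have hb1' : b 1 = 0 := by omega
        have hb2' : b 2 = 0 := by omega
        funext i; fin_cases i <;> simpa
  refine ⟨?_, hirr, ?_, by norm_num, ?_⟩
  · intro i; fin_cases i <;> simp [v, toR, l] <;> norm_num
  · simp [toR, l]; norm_num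
  · intro h
    have := (h _ hirr).2
    simp only [Set.mem_preimage, Set.mem_Icc, toR, l] at this
    norm_num [Matrix.cons_val_two] at this
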